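/- (Proposition 5, main inequality: sufficiency of the verifiable termination test.) Let N ≥ 1, β > 0, k ≥ 1, and let η_0, …, η_k and η̃_0, …, η̃_k be vectors in ℝ^N with ‖η_i − η̃_i‖ ≤ δ_i for each 0 ≤ i ≤ k, where δ_i ≥ 0. Set w = −β·Σ_{i=0}^{k−1} η_i and w̃ = −β·Σ_{i=0}^{k−1} η̃_i. Then for every m ∈ ℝ^N: 2·|⟨w − m, η_k⟩| + ‖η_k‖² ≤ 2·|⟨w̃ − m, η̃_k⟩| + (‖η̃_k‖ + δ_k)² + 2‖w̃ − m‖·δ_k + 2β·(Σ_{i=0}^{k−1} δ_i)·(‖η̃_k‖ + δ_k). Consequently, for any real c > 0, ρ < 1 and any vector v ∈ ℝ^N, if the right-hand side divided by (c + ‖v − m‖²) is < ρ, then (2|⟨w − m, η_k⟩| + ‖η_k‖²)/(c + ‖v − m‖²) < ρ. -/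

import Mathlib

open scoped RealInnerProductSpace

theorem stmt_8 (N : ℕ) (hN : 1 ≤ N) (β : ℝ) (hβ : 0 < β) (k : ℕ) (hk : 1 ≤ k)
    (η ηa : ℕ → EuclideanSpace ℝ (Fin N)) (δ : ℕ → ℝ)
    (hδ : ∀ i ≤ k, 0 ≤ δ i) (herr : ∀ i ≤ k, ‖η i - ηa i‖ ≤ δ i)
    (m : EuclideanSpace ℝ (Fin N)) :
    (2 * |⟪(-β) • (∑ i ∈ Finset.range k, η i) - m, η k⟫| + ‖η k‖ ^ 2 ≤
      2 * |⟪(-β) • (∑ i ∈ Finset.range k, ηa i) - m, ηa k⟫| + (‖ηa k‖ + δ k) ^ 2 +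
        2 * ‖(-β) • (∑ i ∈ Finset.range k, ηa i) - m‖ * δ k +
        2 * β * (∑ i ∈ Finset.range k, δ i) * (‖ηa k‖ + δ k)) ∧
    (∀ (c ρ : ℝ) (v : EuclideanSpace ℝ (Fin N)), 0 < c → ρ < 1 →
      (2 * |⟪(-β) • (∑ i ∈ Finset.range k, ηa i) - m, ηa k⟫| + (‖ηa k‖ + δ k) ^ 2 +
        2 * ‖(-β) • (∑ i ∈ Finset.range k, ηa i) - m‖ * δ k +
        2 * β * (∑ i ∈ Finset.range k, δ i) * (‖ηa k‖ + δ k)) / (c + ‖v - m‖ ^ 2) < ρ →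
      (2 * |⟪(-β) • (∑ i ∈ Finset.range k, η i) - m, η k⟫| + ‖η k‖ ^ 2) /
        (c + ‖v - m‖ ^ 2) < ρ) := by
  set w : EuclideanSpace ℝ (Fin N) := (-β) • (∑ i ∈ Finset.range k, η i) - m with hw
  set wa : EuclideanSpace ℝ (Fin N) := (-β) • (∑ i ∈ Finset.range k, ηa i) - m with hwa
  have hδk := hδ k le_rfl
  have herrk := herr k le_rfl
  have hηk : ‖η k‖ ≤ ‖ηa k‖ + δ k := by
    have := norm_sub_norm_le (η k) (ηa k)
    linarith
  have hsumδ : (0:ℝ) ≤ ∑ i ∈ Finset.range k, δ i :=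
    Finset.sum_nonneg fun i hi => hδ i (le_of_lt (Finset.mem_range.mp hi))
  have hww : ‖w - wa‖ ≤ β * ∑ i ∈ Finset.range k, δ i := by
    have h1 : w - wa = (-β) • (∑ i ∈ Finset.range k, (η i - ηa i)) := by
      rw [hw, hwa, Finset.sum_sub_distrib, smul_sub]
      abel
    rw [h1, norm_smul]
    have h2 : ‖(-β : ℝ)‖ = β := by
      rw [Real.norm_eq_abs, abs_neg, abs_of_pos hβ]
    rw [h2]
    refine mul_le_mul_of_nonneg_left ?_ hβ.le
    calc ‖∑ i ∈ Finset.range k, (η i - ηa i)‖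
        ≤ ∑ i ∈ Finset.range k, ‖η i - ηa i‖ := norm_sum_le _ _
      _ ≤ ∑ i ∈ Finset.range k, δ i :=
        Finset.sum_le_sum fun i hi => herr i (le_of_lt (Finset.mem_range.mp hi))
  have hinner : ⟪w, η k⟫ = ⟪wa, ηa k⟫ + ⟪wa, η k - ηa k⟫ + ⟪w - wa, η k⟫ := by
    simp [inner_sub_left, inner_sub_right]
  have habs : |⟪w, η k⟫| ≤ |⟪wa, ηa k⟫| + ‖wa‖ * δ k
      + (β * ∑ i ∈ Finset.range k, δ i) * (‖ηa k‖ + δ k) := by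
    rw [hinner]
    have h1 : |⟪wa, η k - ηa k⟫| ≤ ‖wa‖ * δ k := by
      calc |⟪wa, η k - ηa k⟫| ≤ ‖wa‖ * ‖η k - ηa k‖ := abs_real_inner_le_norm _ _
        _ ≤ ‖wa‖ * δ k := mul_le_mul_of_nonneg_left herrk (norm_nonneg _)
    have h2 : |⟪w - wa, η k⟫| ≤ (β * ∑ i ∈ Finset.range k, δ i) * (‖ηa k‖ + δ k) := by
      calc |⟪w - wa, η k⟫| ≤ ‖w - wa‖ * ‖η k‖ := abs_real_inner_le_norm _ _
        _ ≤ (β * ∑ i ∈ Finset.range k, δ i) * (‖ηa k‖ + δ k) :=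
          mul_le_mul hww hηk (norm_nonneg _) (by positivity)
    calc |⟪wa, ηa k⟫ + ⟪wa, η k - ηa k⟫ + ⟪w - wa, η k⟫|
        ≤ |⟪wa, ηa k⟫ + ⟪wa, η k - ηa k⟫| + |⟪w - wa, η k⟫| := abs_add_le _ _
      _ ≤ |⟪wa, ηa k⟫| + |⟪wa, η k - ηa k⟫| + |⟪w - wa, η k⟫| := by
          linarith [abs_add_le ⟪wa, ηa k⟫ ⟪wa, η k - ηa k⟫]
      _ ≤ _ := by linarith
  have hsq : ‖η k‖ ^ 2 ≤ (‖ηa k‖ + δ k) ^ 2 := by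
    have := norm_nonneg (η k)
    nlinarith
  have hmain : 2 * |⟪w, η k⟫| + ‖η k‖ ^ 2 ≤
      2 * |⟪wa, ηa k⟫| + (‖ηa k‖ + δ k) ^ 2 + 2 * ‖wa‖ * δ k +
        2 * β * (∑ i ∈ Finset.range k, δ i) * (‖ηa k‖ + δ k) := by
    nlinarith [habs, hsq]
  refine ⟨hmain, ?_⟩
  intro c ρ v hc hρ h
  have hd : 0 < c + ‖v - m‖ ^ 2 := by positivity
  calc (2 * |⟪w, η k⟫| + ‖η k‖ ^ 2) / (c + ‖v - m‖ ^ 2)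
      ≤ (2 * |⟪wa, ηa k⟫| + (‖ηa k‖ + δ k) ^ 2 + 2 * ‖wa‖ * δ k +
        2 * β * (∑ i ∈ Finset.range k, δ i) * (‖ηa k‖ + δ k)) / (c + ‖v - m‖ ^ 2) := by
        gcongr
    _ < ρ := h
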